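/- Let G be a finite group and let H be a subgroup of G. Consider the square matrix over ℚ whose rows and columns are indexed by the G-conjugacy classes of subgroups of H, and whose (P,Q)-entry is the number |P\G/Q| of (P,Q)-double cosets in G. Then the rank of this matrix equals the number of G-conjugacy classes of cyclic subgroups of H. -/

import Mathlib

/-- The set of double cosets `P\G/Q`, i.e. the set of orbits of the action of
`P × Q` on `G` given by `(p, q) · g = p * g * q⁻¹`. -/
def DoubleCosets {G : Type*} [Group G] (P Q : Subgroup G) : Type _ :=
  Quot (fun x y : G => ∃ p ∈ P, ∃ q ∈ Q, p * x * q⁻¹ = y)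


set_option linter.unusedSectionVars false
set_option maxHeartbeats 1000000

namespace ThevAux

attribute [local instance] Classical.propDecidable

open Subgroup ConjClasses MulAction Matrix Submodule

variable {G : Type*} [Group G] [Fintype G]

/-- number of `g` conjugating `q` to `p` -/
noncomputable def N (q p : G) : ℕ := Nat.card {g : G // g * q * g⁻¹ = p}

noncomputable def κ (c : ConjClasses G) : ℕ := N (Quotient.out c) (Quotient.out c)

noncomputable def cnt (P : Subgroup G) (c : ConjClasses G) : ℕ :=
  Nat.card {x : G // x ∈ P ∧ ConjClasses.mk x = c}

noncomputable def wn (C : Subgroup G) (c : ConjClasses G) : ℕ :=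
  Nat.card {x : G // Subgroup.zpowers x = C ∧ ConjClasses.mk x = c}

lemma mk_out' (c : ConjClasses G) : ConjClasses.mk (Quotient.out c) = c :=
  Quotient.out_eq c

lemma κ_pos (c : ConjClasses G) : 0 < κ c := by
  have : Nonempty {g : G // g * Quotient.out c * g⁻¹ = Quotient.out c} := ⟨⟨1, by group⟩⟩
  exact Nat.card_pos

lemma N_eq_zero {q p : G} (h : ¬ IsConj q p) : N q p = 0 := by
  have : IsEmpty {g : G // g * q * g⁻¹ = p} := by
    refine ⟨fun ⟨g, hg⟩ => h ?_⟩
    exact isConj_iff.2 ⟨g, hg⟩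
  simp [N, Nat.card_of_isEmpty]

lemma N_conj_right (a q p : G) : N q p = N (a * q * a⁻¹) p := by
  refine Nat.card_congr (Equiv.subtypeEquiv (Equiv.mulRight a⁻¹) fun g => ?_)
  have : (g * a⁻¹) * (a * q * a⁻¹) * (g * a⁻¹)⁻¹ = g * q * g⁻¹ := by group
  simp only [Equiv.coe_mulRight, this]

lemma N_conj_left (b q p : G) : N q p = N q (b * p * b⁻¹) := by
  refine Nat.card_congr (Equiv.subtypeEquiv (Equiv.mulLeft b) fun g => ?_)
  have h1 : (b * g) * q * (b * g)⁻¹ = b * (g * q * g⁻¹) * b⁻¹ := by group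
  simp only [Equiv.coe_mulLeft, h1]
  constructor
  · rintro rfl; rfl
  · intro h
    exact mul_right_cancel (mul_left_cancel ((mul_assoc _ _ _).symm.trans
      (h.trans (mul_assoc b p b⁻¹))))

lemma N_eq_kappa {q p : G} {c : ConjClasses G} (hq : ConjClasses.mk q = c)
    (hp : ConjClasses.mk p = c) : N q p = κ c := by
  have hq' : IsConj q (Quotient.out c) := by
    rw [← ConjClasses.mk_eq_mk_iff_isConj, hq, mk_out']
  have hp' : IsConj p (Quotient.out c) := by
    rw [← ConjClasses.mk_eq_mk_iff_isConj, hp, mk_out']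
  obtain ⟨a, ha⟩ := isConj_iff.1 hq'
  obtain ⟨b, hb⟩ := isConj_iff.1 hp'
  rw [N_conj_right a q p, ha, N_conj_left b _ p, hb, κ]

lemma N_eq_sum [Fintype (ConjClasses G)] (q p : G) :
    N q p = ∑ c : ConjClasses G,
      if ConjClasses.mk p = c ∧ ConjClasses.mk q = c then κ c else 0 := by
  by_cases h : ConjClasses.mk p = ConjClasses.mk q
  · rw [Finset.sum_eq_single (ConjClasses.mk p)]
    · rw [if_pos ⟨rfl, h.symm⟩]
      exact N_eq_kappa h.symm rfl
    · intro c _ hc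
      rw [if_neg]
      rintro ⟨h1, -⟩
      exact hc h1.symm
    · intro hc
      exact absurd (Finset.mem_univ _) hc
  · rw [N_eq_zero, eq_comm]
    · apply Finset.sum_eq_zero
      intro c _
      rw [if_neg]
      rintro ⟨h1, h2⟩
      exact h (h1.trans h2.symm)
    · intro hcj
      exact h (ConjClasses.mk_eq_mk_iff_isConj.2 hcj.symm)


lemma cnt_eq_sum_subtype (P : Subgroup G) (c : ConjClasses G) :
    (cnt P c : ℕ) = ∑ p : ↥P, if ConjClasses.mk (p : G) = c then 1 else 0 := by
  rw [Finset.sum_boole, Nat.cast_id, cnt]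
  rw [Nat.card_eq_fintype_card]
  rw [Fintype.card_congr (Equiv.subtypeSubtypeEquivSubtypeInter (· ∈ P)
    (fun x => ConjClasses.mk x = c)).symm]
  simp [Fintype.card_subtype]

lemma burnside (P Q : Subgroup G) :
    Nat.card (DoubleCosets P Q) * (Nat.card P * Nat.card Q)
      = ∑ a : ↥P × ↥Q, N (a.2 : G) (a.1 : G) := by
  letI : SMul (↥P × ↥Q) G := ⟨fun a g => a.1 * g * (a.2 : G)⁻¹⟩
  letI : MulAction (↥P × ↥Q) G :=
    { one_smul := fun g => by
        show ((1 : ↥P) : G) * g * ((1 : ↥Q) : G)⁻¹ = g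
        simp
      mul_smul := fun a b g => by
        show ((a.1 * b.1 : ↥P) : G) * g * ((a.2 * b.2 : ↥Q) : G)⁻¹
          = (a.1 : G) * ((b.1 : G) * g * (b.2 : G)⁻¹) * (a.2 : G)⁻¹
        push_cast
        group }
  haveI : Fintype (Quotient (orbitRel (↥P × ↥Q) G)) := Fintype.ofFinite _
  haveI : ∀ a : ↥P × ↥Q, Fintype (fixedBy G a) := fun a => Fintype.ofFinite _
  have hb := MulAction.sum_card_fixedBy_eq_card_orbits_mul_card_group (↥P × ↥Q) G
  have h1 : ∀ a : ↥P × ↥Q, Fintype.card (fixedBy G a) = N (a.2 : G) (a.1 : G) := by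
    intro a
    rw [N, Nat.card_eq_fintype_card]
    apply Fintype.card_congr
    refine Equiv.subtypeEquivRight fun g => ?_
    show (a.1 : G) * g * (a.2 : G)⁻¹ = g ↔ g * (a.2 : G) * g⁻¹ = (a.1 : G)
    rw [mul_inv_eq_iff_eq_mul, mul_inv_eq_iff_eq_mul, eq_comm]
  have h2 : Nat.card (DoubleCosets P Q) = Fintype.card (Quotient (orbitRel (↥P × ↥Q) G)) := by
    rw [← Nat.card_eq_fintype_card]
    apply Nat.card_congr
    apply Quot.congrRight
    intro x y
    show (∃ p ∈ P, ∃ q ∈ Q, p * x * q⁻¹ = y) ↔ @Setoid.r _ (orbitRel (↥P × ↥Q) G) x y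
    have : @Setoid.r _ (orbitRel (↥P × ↥Q) G) x y ↔ x ∈ orbit (↥P × ↥Q) y := Iff.rfl
    rw [this, MulAction.mem_orbit_iff]
    constructor
    · rintro ⟨p, hp, q, hq, rfl⟩
      refine ⟨(⟨p⁻¹, inv_mem hp⟩, ⟨q⁻¹, inv_mem hq⟩), ?_⟩
      show p⁻¹ * (p * x * q⁻¹) * (q⁻¹)⁻¹ = x
      group
    · rintro ⟨⟨p, q⟩, rfl⟩
      refine ⟨(p : G)⁻¹, inv_mem p.2, (q : G)⁻¹, inv_mem q.2, ?_⟩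
      show (p : G)⁻¹ * ((p : G) * y * (q : G)⁻¹) * ((q : G)⁻¹)⁻¹ = y
      group
  calc Nat.card (DoubleCosets P Q) * (Nat.card P * Nat.card Q)
      = Fintype.card (Quotient (orbitRel (↥P × ↥Q) G)) * Fintype.card (↥P × ↥Q) := by
        rw [h2, Fintype.card_prod, Nat.card_eq_fintype_card, Nat.card_eq_fintype_card]
    _ = ∑ a : ↥P × ↥Q, Fintype.card (fixedBy G a) := hb.symm
    _ = ∑ a : ↥P × ↥Q, N (a.2 : G) (a.1 : G) := by simp [h1]


lemma sum_N_eq [Fintype (ConjClasses G)] (P Q : Subgroup G) :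
    ∑ a : ↥P × ↥Q, N (a.2 : G) (a.1 : G)
      = ∑ c : ConjClasses G, cnt P c * cnt Q c * κ c := by
  rw [Fintype.sum_prod_type]
  have step : ∀ p : ↥P, ∀ q : ↥Q, N (q : G) (p : G)
      = ∑ c : ConjClasses G, (if ConjClasses.mk (p : G) = c then 1 else 0)
          * ((if ConjClasses.mk (q : G) = c then 1 else 0) * κ c) := by
    intro p q
    rw [N_eq_sum]
    congr 1
    funext c
    split_ifs with h1 h2 h3 <;> simp_all
  calc ∑ p : ↥P, ∑ q : ↥Q, N (q : G) (p : G)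
      = ∑ p : ↥P, ∑ q : ↥Q, ∑ c : ConjClasses G,
          (if ConjClasses.mk (p : G) = c then 1 else 0)
            * ((if ConjClasses.mk (q : G) = c then 1 else 0) * κ c) := by
        simp_rw [step]
    _ = ∑ p : ↥P, ∑ c : ConjClasses G, ∑ q : ↥Q,
          (if ConjClasses.mk (p : G) = c then 1 else 0)
            * ((if ConjClasses.mk (q : G) = c then 1 else 0) * κ c) :=
        Finset.sum_congr rfl fun p _ => Finset.sum_comm
    _ = ∑ c : ConjClasses G, ∑ p : ↥P, ∑ q : ↥Q,
          (if ConjClasses.mk (p : G) = c then 1 else 0)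
            * ((if ConjClasses.mk (q : G) = c then 1 else 0) * κ c) :=
        Finset.sum_comm
    _ = ∑ c : ConjClasses G, cnt P c * cnt Q c * κ c := by
        apply Finset.sum_congr rfl
        intro c _
        rw [cnt_eq_sum_subtype P c, cnt_eq_sum_subtype Q c, Finset.sum_mul_sum,
          Finset.sum_mul]
        refine Finset.sum_congr rfl fun p _ => ?_
        rw [Finset.sum_mul]
        refine Finset.sum_congr rfl fun q _ => ?_
        ring

lemma rank_conj_diag {m n : Type*} [Fintype m] [Fintype n] [DecidableEq m]
    (A : Matrix m n ℚ) (D : m → ℚ) (hD : ∀ c, 0 < D c) :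
    (Aᵀ * Matrix.diagonal D * A).rank = A.rank := by
  have hker : LinearMap.ker (Aᵀ * Matrix.diagonal D * A).mulVecLin
      = LinearMap.ker A.mulVecLin := by
    ext x
    simp only [LinearMap.mem_ker, Matrix.mulVecLin_apply]
    constructor
    · intro h
      have expand : x ⬝ᵥ ((Aᵀ * Matrix.diagonal D * A).mulVec x)
          = ∑ c, D c * (A.mulVec x c) ^ 2 := by
        rw [← Matrix.mulVec_mulVec, ← Matrix.mulVec_mulVec, Matrix.dotProduct_mulVec,
          Matrix.vecMul_transpose]
        rw [dotProduct]
        refine Finset.sum_congr rfl fun c _ => ?_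
        rw [Matrix.mulVec_diagonal]
        ring
      rw [h] at expand
      simp only [dotProduct_zero] at expand
      funext c
      have hnn : ∀ c ∈ Finset.univ, 0 ≤ D c * (A.mulVec x c) ^ 2 :=
        fun c _ => mul_nonneg (hD c).le (sq_nonneg _)
      have := (Finset.sum_eq_zero_iff_of_nonneg hnn).1 expand.symm c (Finset.mem_univ c)
      have h2 : (A.mulVec x c) ^ 2 = 0 := by
        rcases mul_eq_zero.1 this with h' | h'
        · exact absurd h' (hD c).ne'
        · exact h'
      exact pow_eq_zero_iff (by norm_num) |>.1 h2
    · intro h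
      rw [← Matrix.mulVec_mulVec, h, Matrix.mulVec_zero]
  have h1 := LinearMap.finrank_range_add_finrank_ker (Aᵀ * Matrix.diagonal D * A).mulVecLin
  have h2 := LinearMap.finrank_range_add_finrank_ker A.mulVecLin
  rw [hker] at h1
  rw [Matrix.rank, Matrix.rank]
  omega

lemma span_smul_eq {ι V : Type*} [AddCommGroup V] [Module ℚ V] (v : ι → V) (a : ι → ℚ)
    (ha : ∀ i, a i ≠ 0) :
    span ℚ (Set.range fun i => a i • v i) = span ℚ (Set.range v) := by
  apply le_antisymm <;> rw [Submodule.span_le] <;> rintro _ ⟨i, rfl⟩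
  · exact Submodule.smul_mem _ _ (subset_span ⟨i, rfl⟩)
  · have : v i = (a i)⁻¹ • (a i • v i) := by rw [inv_smul_smul₀ (ha i)]
    rw [this]
    exact Submodule.smul_mem _ _ (subset_span ⟨i, rfl⟩)

noncomputable instance : Fintype (Subgroup G) := Fintype.ofFinite _

lemma nat_card_subtype {p : G → Prop} :
    Nat.card {x : G // p x} = (Finset.univ.filter p).card := by
  rw [Nat.card_eq_fintype_card, Fintype.card_subtype]

lemma cnt_eq_sum_wn (P : Subgroup G) (c : ConjClasses G) :
    cnt P c = ∑ C ∈ Finset.univ.filter (· ≤ P), wn C c := by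
  rw [cnt, nat_card_subtype]
  rw [Finset.card_eq_sum_card_fiberwise (f := fun x => Subgroup.zpowers x)
    (t := Finset.univ.filter (· ≤ P))
    (fun x hx => by
      simp only [Finset.coe_filter, Finset.mem_coe, Finset.mem_filter, Finset.mem_univ, true_and,
        Set.mem_setOf_eq] at hx ⊢
      exact Subgroup.zpowers_le.2 hx.1)]
  refine Finset.sum_congr rfl fun C hC => ?_
  simp only [Finset.mem_filter, Finset.mem_univ, true_and] at hC
  rw [wn, nat_card_subtype]
  congr 1
  ext x
  simp only [Finset.mem_filter, Finset.mem_univ, true_and]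
  constructor
  · rintro ⟨⟨-, h2⟩, h3⟩
    exact ⟨h3, h2⟩
  · rintro ⟨h1, h2⟩
    exact ⟨⟨hC (h1 ▸ Subgroup.mem_zpowers x), h2⟩, h1⟩

lemma mk_conj_eq (g x : G) : ConjClasses.mk (g * x * g⁻¹) = ConjClasses.mk x :=
  ConjClasses.mk_eq_mk_iff_isConj.2 (isConj_iff.2 ⟨g, by group⟩).symm

lemma wn_conj (g : G) (C : Subgroup G) (c : ConjClasses G) :
    wn (Subgroup.map (MulAut.conj g).toMonoidHom C) c = wn C c := by
  symm
  refine Nat.card_congr (Equiv.subtypeEquiv (MulAut.conj g).toEquiv fun x => ?_)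
  have h1 : (MulAut.conj g).toEquiv x = g * x * g⁻¹ := rfl
  rw [h1]
  constructor
  · rintro ⟨h2, h3⟩
    refine ⟨?_, (mk_conj_eq g x).trans h3⟩
    rw [← h2]
    exact (MonoidHom.map_zpowers (MulAut.conj g).toMonoidHom x).symm
  · rintro ⟨h2, h3⟩
    have h4 : Subgroup.map (MulAut.conj g).toMonoidHom (Subgroup.zpowers x)
        = Subgroup.map (MulAut.conj g).toMonoidHom C := by
      rw [MonoidHom.map_zpowers]
      exact h2
    refine ⟨Subgroup.map_injective (MulAut.conj g).injective h4, ?_⟩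
    rw [← mk_conj_eq g x]
    exact h3

lemma cnt_conj (g : G) (P : Subgroup G) (c : ConjClasses G) :
    cnt (Subgroup.map (MulAut.conj g).toMonoidHom P) c = cnt P c := by
  symm
  refine Nat.card_congr (Equiv.subtypeEquiv (MulAut.conj g).toEquiv fun x => ?_)
  have h1 : (MulAut.conj g).toEquiv x = g * x * g⁻¹ := rfl
  rw [h1]
  constructor
  · rintro ⟨h2, h3⟩
    refine ⟨?_, (mk_conj_eq g x).trans h3⟩
    rw [Subgroup.mem_map_equiv]
    have : (MulAut.conj g).symm (g * x * g⁻¹) = x := by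
      rw [MulAut.conj_symm_apply]; group
    rwa [this]
  · rintro ⟨h2, h3⟩
    rw [Subgroup.mem_map_equiv] at h2
    have : (MulAut.conj g).symm (g * x * g⁻¹) = x := by
      rw [MulAut.conj_symm_apply]; group
    rw [this] at h2
    exact ⟨h2, (mk_conj_eq g x).symm.trans h3⟩

lemma exists_gen (C : Subgroup G) (hC : IsCyclic ↥C) : ∃ x : G, Subgroup.zpowers x = C := by
  obtain ⟨g, hg⟩ := hC.exists_generator
  refine ⟨(g : G), le_antisymm (Subgroup.zpowers_le.2 g.2) fun x hx => ?_⟩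
  obtain ⟨k, hk⟩ := Subgroup.mem_zpowers_iff.1 (hg ⟨x, hx⟩)
  exact Subgroup.mem_zpowers_iff.2 ⟨k, by
    have := congrArg (Subtype.val) hk
    simpa using this⟩

lemma zpowers_isCyclic (x : G) : IsCyclic ↥(Subgroup.zpowers x) := by
  refine ⟨⟨⟨x, Subgroup.mem_zpowers x⟩, ?_⟩⟩
  rintro ⟨y, hy⟩
  obtain ⟨k, hk⟩ := Subgroup.mem_zpowers_iff.1 hy
  exact Subgroup.mem_zpowers_iff.2 ⟨k, by ext; simpa using hk⟩

lemma wn_eq_zero {C : Subgroup G} (h : ¬ IsCyclic ↥C) (c : ConjClasses G) : wn C c = 0 := by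
  have : IsEmpty {x : G // Subgroup.zpowers x = C ∧ ConjClasses.mk x = c} := by
    refine ⟨fun ⟨x, hx, _⟩ => h ?_⟩
    rw [← hx]
    exact zpowers_isCyclic x
  simp [wn, Nat.card_of_isEmpty]

lemma conj_of_wn_ne {C C' : Subgroup G} {c : ConjClasses G} (h1 : wn C c ≠ 0)
    (h2 : wn C' c ≠ 0) : ∃ g : G, Subgroup.map (MulAut.conj g).toMonoidHom C = C' := by
  rw [wn, Nat.card_ne_zero] at h1 h2
  obtain ⟨⟨x, hxC, hxc⟩⟩ := h1.1
  obtain ⟨⟨y, hyC, hyc⟩⟩ := h2.1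
  have : IsConj x y := ConjClasses.mk_eq_mk_iff_isConj.1 (hxc.trans hyc.symm)
  obtain ⟨g, hg⟩ := isConj_iff.1 this
  refine ⟨g, ?_⟩
  have hgx : (MulAut.conj g).toMonoidHom x = y := by
    show g * x * g⁻¹ = y
    exact hg
  rw [← hxC, MonoidHom.map_zpowers, hgx, hyC]

lemma cyclic_of_le {C D : Subgroup G} (hC : IsCyclic ↥C) (hD : D ≤ C) : IsCyclic ↥D := by
  haveI := hC
  haveI : IsCyclic ↥(D.subgroupOf C) := Subgroup.isCyclic _
  exact isCyclic_of_surjective (Subgroup.subgroupOfEquivOfLe hD).toMonoidHom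
    (Subgroup.subgroupOfEquivOfLe hD).surjective

lemma card_lt_of_lt {C D : Subgroup G} (hD : D < C) : Nat.card ↥D < Nat.card ↥C := by
  rcases lt_or_eq_of_le (Subgroup.card_le_of_le hD.le) with h | h
  · exact h
  · exact absurd (Subgroup.eq_of_le_of_card_ge hD.le h.ge) hD.ne

lemma wn_pos_of_gen {C : Subgroup G} {x : G} (hx : Subgroup.zpowers x = C) :
    wn C (ConjClasses.mk x) ≠ 0 := by
  rw [wn, Nat.card_ne_zero]
  exact ⟨⟨⟨x, hx, rfl⟩⟩, inferInstance⟩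


end ThevAux

open ThevAux Subgroup Submodule Matrix in
/-- **Counting conjugacy classes of cyclic subgroups (Th\'evenaz).**
Let `G` be a finite group and `H ≤ G`.  Let `f i`, for `i` in a finite index type `ι`,
be a system of representatives of the `G`-conjugacy classes of subgroups of `H`.
Then the rank of the matrix `(|P\G/Q|)_{P,Q ≤_G H}` over `ℚ` equals the number of
`G`-conjugacy classes of cyclic subgroups of `H`. -/
theorem rank_doubleCoset_matrix_eq_card_cyclic_classes
    {G : Type*} [Group G] [Fintype G] (H : Subgroup G)
    {ι : Type} [Fintype ι] [DecidableEq ι] (f : ι → Subgroup G)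
    (hle : ∀ i, f i ≤ H)
    (hrep : ∀ P : Subgroup G, P ≤ H →
      ∃! i, ∃ g : G, Subgroup.map (MulAut.conj g).toMonoidHom P = f i) :
    (Matrix.of fun i j : ι => (Nat.card (DoubleCosets (f i) (f j)) : ℚ)).rank
      = Nat.card (Quot (fun P Q : {P : Subgroup G // P ≤ H ∧ IsCyclic ↥P} =>
          ∃ g : G, Subgroup.map (MulAut.conj g).toMonoidHom (P : Subgroup G)
            = (Q : Subgroup G))) := by
  classical
  haveI : Fintype (ConjClasses G) := Fintype.ofFinite _
  set rel := fun P Q : {P : Subgroup G // P ≤ H ∧ IsCyclic ↥P} =>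
      ∃ g : G, Subgroup.map (MulAut.conj g).toMonoidHom (P : Subgroup G)
        = (Q : Subgroup G) with hrel
  haveI : Fintype (Quot rel) := Fintype.ofFinite _
  -- the unnormalized count vectors
  set v : ι → ConjClasses G → ℚ := fun i => fun c => (cnt (f i) c : ℚ) with hv
  set A : Matrix (ConjClasses G) ι ℚ :=
    Matrix.of fun c i => ((Nat.card (f i) : ℚ))⁻¹ * cnt (f i) c with hA
  set D : ConjClasses G → ℚ := fun c => (κ c : ℚ) with hD
  have hcard_pos : ∀ i, (0:ℚ) < (Nat.card (f i) : ℚ) := fun i => by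
    exact_mod_cast (Nat.card_pos : 0 < Nat.card (f i))
  have hDpos : ∀ c, 0 < D c := fun c =>
    show (0:ℚ) < ((κ c : ℕ) : ℚ) by exact_mod_cast κ_pos c
  -- Step 1: matrix factorization
  have hM : (Matrix.of fun i j : ι => (Nat.card (DoubleCosets (f i) (f j)) : ℚ))
      = Aᵀ * Matrix.diagonal D * A := by
    ext i j
    have hnat := (burnside (f i) (f j)).trans (sum_N_eq (f i) (f j))
    have hQ : (Nat.card (DoubleCosets (f i) (f j)) : ℚ)
        * ((Nat.card (f i) : ℚ) * (Nat.card (f j) : ℚ))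
        = ∑ c : ConjClasses G, (cnt (f i) c : ℚ) * (cnt (f j) c : ℚ) * (κ c : ℚ) := by
      exact_mod_cast congrArg (fun n : ℕ => (n : ℚ)) hnat
    rw [Matrix.mul_assoc, Matrix.mul_apply]
    simp only [Matrix.transpose_apply, Matrix.diagonal_mul, Matrix.of_apply, hA, hD]
    have hsum : ∑ c : ConjClasses G,
        ((Nat.card (f i) : ℚ))⁻¹ * (cnt (f i) c : ℚ)
          * ((κ c : ℚ) * (((Nat.card (f j) : ℚ))⁻¹ * (cnt (f j) c : ℚ)))
        = ((Nat.card (f i) : ℚ))⁻¹ * ((Nat.card (f j) : ℚ))⁻¹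
          * ∑ c : ConjClasses G, (cnt (f i) c : ℚ) * (cnt (f j) c : ℚ) * (κ c : ℚ) := by
      rw [Finset.mul_sum]
      exact Finset.sum_congr rfl fun c _ => by ring
    rw [hsum, ← hQ]
    field_simp
  rw [hM, rank_conj_diag A D hDpos, Matrix.rank_eq_finrank_span_cols]
  -- Step 2: columns span the same space as the vectors v
  have hAT : A.col = fun i => ((Nat.card (f i) : ℚ))⁻¹ • v i := rfl
  rw [hAT, span_smul_eq v _ (fun i => inv_ne_zero (hcard_pos i).ne')]
  -- Step 3: the w-vectors indexed by classes of cyclic subgroups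
  set W : Quot rel → ConjClasses G → ℚ :=
    Quot.lift (fun P : {P : Subgroup G // P ≤ H ∧ IsCyclic ↥P} =>
        fun c => (wn (P : Subgroup G) c : ℚ))
      (by
        rintro P Q ⟨g, hg⟩
        funext c
        show (wn (↑P : Subgroup G) c : ℚ) = (wn (↑Q : Subgroup G) c : ℚ)
        rw [← hg, wn_conj]) with hW
  -- linear independence of W
  have hWli : LinearIndependent ℚ W := by
    rw [Fintype.linearIndependent_iff]
    intro coef hsum t
    induction t using Quot.ind with
    | _ P =>
      obtain ⟨x, hx⟩ := exists_gen (↑P : Subgroup G) P.2.2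
      have h0 : wn (↑P : Subgroup G) (ConjClasses.mk x) ≠ 0 := wn_pos_of_gen hx
      have hev := congrFun hsum (ConjClasses.mk x)
      simp only [Finset.sum_apply, Pi.smul_apply, smul_eq_mul, Pi.zero_apply] at hev
      rw [Finset.sum_eq_single (Quot.mk rel P)] at hev
      · have hWne : W (Quot.mk rel P) (ConjClasses.mk x) ≠ 0 := by
          show ((wn (↑P : Subgroup G) (ConjClasses.mk x) : ℚ)) ≠ 0
          exact_mod_cast h0
        exact (mul_eq_zero.1 hev).resolve_right hWne
      · intro t' _ hne
        induction t' using Quot.ind with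
        | _ P' =>
          by_cases hz : wn (↑P' : Subgroup G) (ConjClasses.mk x) = 0
          · have : W (Quot.mk rel P') (ConjClasses.mk x) = 0 := by
              show ((wn (↑P' : Subgroup G) (ConjClasses.mk x) : ℚ)) = 0
              exact_mod_cast hz
            rw [this, mul_zero]
          · obtain ⟨g, hg⟩ := conj_of_wn_ne hz h0
            exact absurd (Quot.sound ⟨g, hg⟩) hne
      · intro ht
        exact absurd (Finset.mem_univ _) ht
  -- Step 4: span of v equals span of W
  have hspan : span ℚ (Set.range v) = span ℚ (Set.range W) := by
    apply le_antisymm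
    · rw [span_le]
      rintro _ ⟨i, rfl⟩
      have hvi : v i = ∑ C ∈ Finset.univ.filter (· ≤ f i), (fun c => (wn C c : ℚ)) := by
        funext c
        rw [hv]
        simp only [Finset.sum_apply]
        rw [cnt_eq_sum_wn]
        push_cast
        rfl
      rw [hvi]
      refine sum_mem fun C hC => ?_
      simp only [Finset.mem_filter, Finset.mem_univ, true_and] at hC
      by_cases hcyc : IsCyclic ↥C
      · exact subset_span ⟨Quot.mk rel ⟨C, le_trans hC (hle i), hcyc⟩, rfl⟩
      · have : (fun c => (wn C c : ℚ)) = 0 := by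
          funext c
          simp [wn_eq_zero hcyc]
        rw [this]
        exact zero_mem _
    · rw [span_le]
      rintro _ ⟨t, rfl⟩
      have key : ∀ n : ℕ, ∀ C : Subgroup G, Nat.card C ≤ n → C ≤ H → IsCyclic ↥C →
          (fun c => (wn C c : ℚ)) ∈ span ℚ (Set.range v) := by
        intro n
        induction n with
        | zero =>
          intro C hn _ _
          have : 0 < Nat.card C := Nat.card_pos
          omega
        | succ n ih =>
          intro C hn hCH hcyc
          obtain ⟨i, ⟨g, hgi⟩, -⟩ := hrep C hCH
          have hvi : v i = ∑ E ∈ Finset.univ.filter (· ≤ C), (fun c => (wn E c : ℚ)) := by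
            funext c
            rw [hv]
            simp only [Finset.sum_apply]
            have hc1 : cnt (f i) c = cnt C c := by rw [← hgi, cnt_conj]
            rw [hc1, cnt_eq_sum_wn]
            push_cast
            rfl
          have hmemC : C ∈ Finset.univ.filter (· ≤ C) := by simp
          have hsplit : (fun c => (wn C c : ℚ))
              = v i - ∑ E ∈ (Finset.univ.filter (· ≤ C)).erase C,
                  (fun c => (wn E c : ℚ)) := by
            rw [hvi, ← Finset.add_sum_erase _ _ hmemC]
            abel
          rw [hsplit]
          refine sub_mem (subset_span ⟨i, rfl⟩) (sum_mem fun E hE => ?_)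
          have hEne : E ≠ C := (Finset.mem_erase.1 hE).1
          have hEle : E ≤ C := by
            have := (Finset.mem_erase.1 hE).2
            simpa using this
          have hlt : E < C := lt_of_le_of_ne hEle hEne
          have hcard := card_lt_of_lt hlt
          exact ih E (by omega) (le_trans hEle hCH) (cyclic_of_le hcyc hEle)
      induction t using Quot.ind with
      | _ P => exact key (Nat.card (↑P : Subgroup G)) ↑P le_rfl P.2.1 P.2.2
  rw [hspan, finrank_span_eq_card hWli, ← Nat.card_eq_fintype_card]
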